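/- Let K̃(s) = Σ_k h_k(s) Ã_k with continuously differentiable h_k, invertible at μᵢ for i = 1,…,n, and H̃(s) = C̃ K̃(s)⁻¹ B̃. Then the Hermite conditions ℓᵢᵀ H̃(μᵢ) = fᵢᵀ and ℓᵢᵀ H̃′(μᵢ) = (fᵢ′)ᵀ hold for all i if and only if there exist matrices P_F, P_{F′} ∈ ℂ^{n×n} satisfying Fᵀ = P_Fᵀ B̃, Σ_k h_k(M) P_Fᵀ Ã_k = Lᵀ C̃, (F′)ᵀ = P_{F′}ᵀ B̃, and Σ_k h_k(M) P_{F′}ᵀ Ã_k = −Σ_k h_k′(M) P_Fᵀ Ã_k. -/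
import Mathlib
open Matrix BigOperators

private lemma row_mul' {a b c : ℕ} (M : Matrix (Fin a) (Fin b) ℂ) (N : Matrix (Fin b) (Fin c) ℂ)
    (i : Fin a) : (M * N) i = M i ᵥ* N := by
  funext j; simp [Matrix.mul_apply, Matrix.vecMul, dotProduct]

private lemma vecMul_sum' {n m K : ℕ} (x : Fin n → ℂ) (M : Fin K → Matrix (Fin n) (Fin m) ℂ) :
    x ᵥ* (∑ k, M k) = ∑ k, x ᵥ* M k := by
  funext j
  simp only [Matrix.vecMul, dotProduct, Matrix.sum_apply, Finset.sum_apply, Finset.mul_sum]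
  exact Finset.sum_comm ..

private lemma vecMul_smulM {n m : ℕ} (c : ℂ) (x : Fin n → ℂ) (M : Matrix (Fin n) (Fin m) ℂ) :
    x ᵥ* (c • M) = c • (x ᵥ* M) := by
  funext j
  simp only [Matrix.vecMul, dotProduct, Matrix.smul_apply, Pi.smul_apply, smul_eq_mul,
    Finset.mul_sum]
  exact Finset.sum_congr rfl fun i _ => by ring

private lemma smul_vecMul' {n m : ℕ} (c : ℂ) (x : Fin n → ℂ) (M : Matrix (Fin n) (Fin m) ℂ) :
    (c • x) ᵥ* M = c • (x ᵥ* M) := by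
  funext j
  simp only [Matrix.vecMul, dotProduct, Pi.smul_apply, smul_eq_mul, Finset.mul_sum]
  exact Finset.sum_congr rfl fun i _ => by ring

/-- Row `i` of `∑ k, diagonal (c k) * P * A k` equals `P i ᵥ* (∑ k, c k i • A k)`. -/
private lemma rowSum {n K : ℕ} (c : Fin K → Fin n → ℂ) (P : Matrix (Fin n) (Fin n) ℂ)
    (A : Fin K → Matrix (Fin n) (Fin n) ℂ) (i : Fin n) :
    (∑ k, Matrix.diagonal (c k) * P * A k) i = P i ᵥ* (∑ k, c k i • A k) := by
  rw [vecMul_sum']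
  have key : ∀ k : Fin K, (Matrix.diagonal (c k) * P * A k) i = P i ᵥ* (c k i • A k) := by
    intro k
    rw [row_mul', vecMul_smulM]
    have hrow : (Matrix.diagonal (c k) * P) i = c k i • P i := by
      funext j; simp [Matrix.diagonal_mul]
    rw [hrow, smul_vecMul']
  calc (∑ k, Matrix.diagonal (c k) * P * A k) i
      = ∑ k, (Matrix.diagonal (c k) * P * A k) i := by
        funext j; simp [Matrix.sum_apply, Finset.sum_apply]
    _ = ∑ k, P i ᵥ* (c k i • A k) := by simp_rw [key]

/-- Characterization of left Hermite interpolation for a structured realization. -/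
theorem stmt15 {n m p K : ℕ} (h hd : Fin K → ℂ → ℂ)
    (hderiv : ∀ k s, HasDerivAt (h k) (hd k s) s)
    (A : Fin K → Matrix (Fin n) (Fin n) ℂ)
    (B : Matrix (Fin n) (Fin m) ℂ) (C : Matrix (Fin p) (Fin n) ℂ)
    (μ : Fin n → ℂ)
    (L : Matrix (Fin p) (Fin n) ℂ) (F F' : Matrix (Fin m) (Fin n) ℂ)
    (hinv : ∀ i, IsUnit (∑ k, h k (μ i) • A k).det) :
    ((∀ i, (Lᵀ i) ᵥ* (C * (∑ k, h k (μ i) • A k)⁻¹ * B) = Fᵀ i) ∧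
     (∀ i, (Lᵀ i) ᵥ*
        (-(C * (∑ k, h k (μ i) • A k)⁻¹ * (∑ k, hd k (μ i) • A k) *
            (∑ k, h k (μ i) • A k)⁻¹ * B)) = F'ᵀ i)) ↔
      (∃ PF PF' : Matrix (Fin n) (Fin n) ℂ,
        Fᵀ = PFᵀ * B ∧
        (∑ k, Matrix.diagonal (fun i => h k (μ i)) * PFᵀ * A k = Lᵀ * C) ∧
        F'ᵀ = PF'ᵀ * B ∧
        (∑ k, Matrix.diagonal (fun i => h k (μ i)) * PF'ᵀ * A k =
          -∑ k, Matrix.diagonal (fun i => hd k (μ i)) * PFᵀ * A k)) := by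
  let Kt : Fin n → Matrix (Fin n) (Fin n) ℂ := fun i => ∑ k, h k (μ i) • A k
  let Kd : Fin n → Matrix (Fin n) (Fin n) ℂ := fun i => ∑ k, hd k (μ i) • A k
  have hKK : ∀ i, (Kt i)⁻¹ * Kt i = 1 := fun i => Matrix.nonsing_inv_mul _ (hinv i)
  have hKK' : ∀ i, Kt i * (Kt i)⁻¹ = 1 := fun i => Matrix.mul_nonsing_inv _ (hinv i)
  constructor
  · rintro ⟨h1, h2⟩
    set PFT : Matrix (Fin n) (Fin n) ℂ := Matrix.of fun i => Lᵀ i ᵥ* (C * (Kt i)⁻¹) with hPFT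
    set PFT' : Matrix (Fin n) (Fin n) ℂ :=
      Matrix.of fun i => Lᵀ i ᵥ* (-(C * (Kt i)⁻¹ * Kd i * (Kt i)⁻¹)) with hPFT'
    have rPFT : ∀ i, PFT i = Lᵀ i ᵥ* (C * (Kt i)⁻¹) := fun i => rfl
    have rPFT' : ∀ i, PFT' i = Lᵀ i ᵥ* (-(C * (Kt i)⁻¹ * Kd i * (Kt i)⁻¹)) := fun i => rfl
    refine ⟨PFTᵀ, PFT'ᵀ, ?_, ?_, ?_, ?_⟩
    · rw [Matrix.transpose_transpose]
      funext i
      rw [row_mul', rPFT, Matrix.vecMul_vecMul, Matrix.mul_assoc, ← Matrix.mul_assoc,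
        ← h1 i]
    · rw [Matrix.transpose_transpose]
      funext i
      rw [rowSum, rPFT, Matrix.vecMul_vecMul, Matrix.mul_assoc]
      show Lᵀ i ᵥ* (C * ((Kt i)⁻¹ * Kt i)) = (Lᵀ * C) i
      rw [hKK, Matrix.mul_one, row_mul']
    · rw [Matrix.transpose_transpose]
      funext i
      rw [row_mul', rPFT', Matrix.vecMul_vecMul, Matrix.neg_mul, ← h2 i]
    · rw [Matrix.transpose_transpose, Matrix.transpose_transpose]
      funext i
      have hneg : (-∑ k, Matrix.diagonal (fun i => hd k (μ i)) * PFT * A k) i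
          = -((∑ k, Matrix.diagonal (fun i => hd k (μ i)) * PFT * A k) i) := rfl
      rw [rowSum, hneg, rowSum, rPFT, rPFT', Matrix.vecMul_vecMul, Matrix.vecMul_vecMul,
        Matrix.neg_mul, Matrix.vecMul_neg]
      show -(Lᵀ i ᵥ* (C * (Kt i)⁻¹ * Kd i * (Kt i)⁻¹ * Kt i)) = -(Lᵀ i ᵥ* (C * (Kt i)⁻¹ * Kd i))
      rw [Matrix.mul_assoc (C * (Kt i)⁻¹ * Kd i), hKK, Matrix.mul_one]
  · rintro ⟨PF, PF', e1, e2, e3, e4⟩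
    have hPFrow : ∀ i, PFᵀ i ᵥ* Kt i = Lᵀ i ᵥ* C := by
      intro i
      have h2' := congrFun e2 i
      rw [rowSum] at h2'
      rw [h2', row_mul']
    have hPF : ∀ i, PFᵀ i = Lᵀ i ᵥ* (C * (Kt i)⁻¹) := by
      intro i
      calc PFᵀ i = PFᵀ i ᵥ* (Kt i * (Kt i)⁻¹) := by rw [hKK', Matrix.vecMul_one]
        _ = (PFᵀ i ᵥ* Kt i) ᵥ* (Kt i)⁻¹ := (Matrix.vecMul_vecMul _ _ _).symm
        _ = (Lᵀ i ᵥ* C) ᵥ* (Kt i)⁻¹ := by rw [hPFrow]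
        _ = Lᵀ i ᵥ* (C * (Kt i)⁻¹) := Matrix.vecMul_vecMul _ _ _
    have hPF'row : ∀ i, PF'ᵀ i ᵥ* Kt i = -(PFᵀ i ᵥ* Kd i) := by
      intro i
      have h4' := congrFun e4 i
      rw [rowSum] at h4'
      rw [h4']
      have : (-∑ k, Matrix.diagonal (fun i => hd k (μ i)) * PFᵀ * A k) i
          = -((∑ k, Matrix.diagonal (fun i => hd k (μ i)) * PFᵀ * A k) i) := rfl
      rw [this, rowSum]
    constructor
    · intro i
      calc Lᵀ i ᵥ* (C * (∑ k, h k (μ i) • A k)⁻¹ * B)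
          = (Lᵀ i ᵥ* (C * (Kt i)⁻¹)) ᵥ* B := (Matrix.vecMul_vecMul _ _ _).symm
        _ = PFᵀ i ᵥ* B := by rw [hPF]
        _ = (PFᵀ * B) i := (row_mul' _ _ _).symm
        _ = Fᵀ i := by rw [← e1]
    · intro i
      calc Lᵀ i ᵥ* (-(C * (∑ k, h k (μ i) • A k)⁻¹ * (∑ k, hd k (μ i) • A k) *
            (∑ k, h k (μ i) • A k)⁻¹ * B))
          = -(((Lᵀ i ᵥ* (C * (Kt i)⁻¹)) ᵥ* Kd i) ᵥ* ((Kt i)⁻¹ * B)) := by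
            rw [Matrix.vecMul_neg, Matrix.vecMul_vecMul, Matrix.vecMul_vecMul]
            show -(Lᵀ i ᵥ* (C * (Kt i)⁻¹ * Kd i * (Kt i)⁻¹ * B)) =
              -(Lᵀ i ᵥ* (C * (Kt i)⁻¹ * (Kd i * ((Kt i)⁻¹ * B))))
            rw [Matrix.mul_assoc (C * (Kt i)⁻¹ * Kd i), Matrix.mul_assoc (C * (Kt i)⁻¹)]
        _ = -((PFᵀ i ᵥ* Kd i) ᵥ* ((Kt i)⁻¹ * B)) := by rw [hPF]
        _ = (PF'ᵀ i ᵥ* Kt i) ᵥ* ((Kt i)⁻¹ * B) := by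
            rw [hPF'row, Matrix.neg_vecMul]
        _ = PF'ᵀ i ᵥ* (Kt i * ((Kt i)⁻¹ * B)) := Matrix.vecMul_vecMul _ _ _
        _ = PF'ᵀ i ᵥ* B := by rw [← Matrix.mul_assoc, hKK', Matrix.one_mul]
        _ = (PF'ᵀ * B) i := (row_mul' _ _ _).symm
        _ = F'ᵀ i := by rw [← e3]
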